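/- If G is an f-equitable graph with quotient matrix Q (of size (r+1)×(r+1)) and G' is an f'-equitable graph with quotient matrix Q' (of size (r'+1)×(r'+1)), then the Cartesian product G □ G' is (f,f')-equitable with quotient matrix Q ⊗ I_{r'+1} + I_{r+1} ⊗ Q', where (f,f')((u,u'),(v,v')) = (f(u,v), f'(u',v')). -/

import Mathlib

open Kronecker

/-- `G` is `f`-equitable with distinguished value `x0` and quotient matrix `Q`:
for every vertex `o` the level sets of `f o ·` form an equitable partition with
singleton cell `{o}` at `x0` and with quotient matrix `Q` independent of `o`. -/
def IsFEquitable {V ι : Type*} [DecidableEq ι]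
    (G : SimpleGraph V) [∀ v, Fintype (G.neighborSet v)]
    (f : V → V → ι) (x0 : ι) (Q : ι → ι → ℕ) : Prop :=
  (∀ o v : V, f o v = x0 ↔ v = o) ∧
    ∀ (o v : V) (i : ι),
      ((G.neighborFinset v).filter (fun u => f o u = i)).card = Q i (f o v)

/-- If `G` is `f`-equitable with quotient matrix `Q` and `G'` is
`f'`-equitable with quotient matrix `Q'`, then `G □ G'` is `(f,f')`-equitable with
quotient matrix the Kronecker sum `Q ⊗ I + I ⊗ Q'`. -/
theorem boxProd_isFEquitable {V V' : Type*} [Fintype V] [Fintype V']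
    [DecidableEq V] [DecidableEq V'] {r r' : ℕ}
    (G : SimpleGraph V) (G' : SimpleGraph V')
    [DecidableRel G.Adj] [DecidableRel G'.Adj]
    (f : V → V → Fin (r + 1)) (f' : V' → V' → Fin (r' + 1))
    (Q : Matrix (Fin (r + 1)) (Fin (r + 1)) ℕ)
    (Q' : Matrix (Fin (r' + 1)) (Fin (r' + 1)) ℕ)
    (hG : IsFEquitable G f 0 Q) (hG' : IsFEquitable G' f' 0 Q') :
    IsFEquitable (G □ G') (fun o p => (f o.1 p.1, f' o.2 p.2)) (0, 0)
      (fun i j =>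
        (Q ⊗ₖ (1 : Matrix (Fin (r' + 1)) (Fin (r' + 1)) ℕ) +
          (1 : Matrix (Fin (r + 1)) (Fin (r + 1)) ℕ) ⊗ₖ Q') i j) := by
  constructor
  · rintro ⟨o1, o2⟩ ⟨v1, v2⟩
    simp [Prod.ext_iff, hG.1, hG'.1]
  · rintro ⟨o1, o2⟩ ⟨v1, v2⟩ ⟨i1, i2⟩
    rw [SimpleGraph.neighborFinset_boxProd, Finset.disjUnion_eq_union, Finset.filter_union,
      Finset.card_union_of_disjoint (Finset.disjoint_filter_filter
        (Finset.disjoint_product.mpr <| Or.inl <|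
          SimpleGraph.neighborFinset_disjoint_singleton _ _))]
    have h1 : ((G.neighborFinset v1 ×ˢ ({v2} : Finset V')).filter
        (fun u : V × V' => (f o1 u.1, f' o2 u.2) = (i1, i2))).card
        = Q i1 (f o1 v1) * (if i2 = f' o2 v2 then 1 else 0) := by
      rw [show ((G.neighborFinset v1 ×ˢ ({v2} : Finset V')).filter
          (fun u : V × V' => (f o1 u.1, f' o2 u.2) = (i1, i2)))
          = ((G.neighborFinset v1).filter (fun u => f o1 u = i1)) ×ˢ
            (({v2} : Finset V').filter (fun u => f' o2 u = i2)) by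
        ext ⟨u1, u2⟩
        simp [Prod.ext_iff, and_assoc, and_left_comm, eq_comm]]
      rw [Finset.card_product, hG.2]
      congr 1
      simp only [Finset.filter_singleton]
      split_ifs with h h' h'
      · simp
      · exact absurd h.symm h'
      · exact absurd h'.symm h
      · simp
    have h2 : ((({v1} : Finset V) ×ˢ G'.neighborFinset v2).filter
        (fun u : V × V' => (f o1 u.1, f' o2 u.2) = (i1, i2))).card
        = (if i1 = f o1 v1 then 1 else 0) * Q' i2 (f' o2 v2) := by
      rw [show ((({v1} : Finset V) ×ˢ G'.neighborFinset v2).filter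
          (fun u : V × V' => (f o1 u.1, f' o2 u.2) = (i1, i2)))
          = (({v1} : Finset V).filter (fun u => f o1 u = i1)) ×ˢ
            ((G'.neighborFinset v2).filter (fun u => f' o2 u = i2)) by
        ext ⟨u1, u2⟩
        simp [Prod.ext_iff, and_assoc, and_left_comm, eq_comm]]
      rw [Finset.card_product, hG'.2]
      congr 1
      simp only [Finset.filter_singleton]
      split_ifs with h h' h'
      · simp
      · exact absurd h.symm h'
      · exact absurd h'.symm h
      · simp
    rw [h1, h2]
    simp [Matrix.kroneckerMap_apply, Matrix.one_apply]
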